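/- Let V be a 3-dimensional real vector space with a nondegenerate symmetric bilinear form g, v ∈ V with ⟨v,v⟩ ≠ 0, q ≠ 0, Λ ∈ ℝ, and define G(a,b) = q(⟨v,a⟩⟨v,b⟩ - (1/2)⟨v,v⟩ g(a,b)) - Λ g(a,b). Let B = (1/2)·((1/3)G₁G₂ - G₃)/(G₂ - (1/3)G₁²) with G₁, G₂, G₃ the traces of the first three powers of the g-raised endomorphism of G, and define H(a,b) = G(a,b) - (G₁ + 2B) g(a,b). Then H(a,b) = q ⟨v,a⟩⟨v,b⟩ for all a, b ∈ V. -/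

import Mathlib

open Matrix

/-- With `G` as in the non-null Einstein–Maxwell equations,
`B` the Rainich scalar and `H(a,b) = G(a,b) - (G₁ + 2B) g(a,b)`, one recovers the
rank-one piece: `H(a,b) = q ⟨v,a⟩⟨v,b⟩`. -/
theorem stmt2 (g G : Matrix (Fin 3) (Fin 3) ℝ) (hg : g.IsSymm) (hdet : IsUnit g.det)
    (v : Fin 3 → ℝ) (q Λ : ℝ) (hv : v ⬝ᵥ (g *ᵥ v) ≠ 0) (hq : q ≠ 0)
    (hG : ∀ a b, G a b =
      q * ((g *ᵥ v) a * (g *ᵥ v) b - (1/2) * (v ⬝ᵥ (g *ᵥ v)) * g a b) - Λ * g a b)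
    (B : ℝ)
    (hB : B = (1/2) * ((1/3) * (g⁻¹ * G).trace * ((g⁻¹ * G) ^ 2).trace
        - ((g⁻¹ * G) ^ 3).trace) /
      (((g⁻¹ * G) ^ 2).trace - (1/3) * ((g⁻¹ * G).trace) ^ 2)) :
    ∀ a b, G a b - ((g⁻¹ * G).trace + 2 * B) * g a b
      = q * (g *ᵥ v) a * (g *ᵥ v) b := by
  set w := g *ᵥ v with hw
  set s := v ⬝ᵥ w with hs
  set μ := q * (1/2) * s + Λ with hμ
  have hGmat : G = q • vecMulVec w w - μ • g := by
    ext a b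
    simp [hG a b, vecMulVec_apply, hμ]
    ring
  have hinv : g⁻¹ * g = 1 := nonsing_inv_mul g hdet
  have hvw : g⁻¹ *ᵥ w = v := by
    rw [hw, mulVec_mulVec, hinv, one_mulVec]
  have hP : g⁻¹ * vecMulVec w w = vecMulVec v w := by
    rw [vecMulVec_eq Unit, vecMulVec_eq Unit, ← Matrix.mul_assoc, ← replicateCol_mulVec, hvw]
  have hM : g⁻¹ * G = q • vecMulVec v w - μ • 1 := by
    rw [hGmat, Matrix.mul_sub, Matrix.mul_smul, Matrix.mul_smul, hP, hinv]
  set P := vecMulVec v w with hPdef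
  have hPP : P * P = s • P := by
    ext i j
    simp [hPdef, mul_apply, vecMulVec_apply, hs, dotProduct, Fin.sum_univ_three]
    ring
  have htP : P.trace = s := by
    rw [hPdef, vecMulVec_eq Unit, trace_replicateCol_mul_replicateRow, hs]
  have hM2 : (g⁻¹ * G) ^ 2 = (q^2*s - 2*(q*μ)) • P + (μ^2) • (1 : Matrix (Fin 3) (Fin 3) ℝ) := by
    rw [pow_two, hM]
    simp only [Matrix.sub_mul, Matrix.mul_sub, Matrix.smul_mul, Matrix.mul_smul, hPP,
      Matrix.one_mul, Matrix.mul_one, smul_smul]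
    module
  have hM3 : (g⁻¹ * G) ^ 3 = (q^3*s^2 - 3*(q^2*μ*s) + 3*(q*μ^2)) • P
      - (μ^3) • (1 : Matrix (Fin 3) (Fin 3) ℝ) := by
    rw [pow_succ, hM2, hM]
    simp only [Matrix.add_mul, Matrix.mul_sub, Matrix.smul_mul, Matrix.mul_smul, hPP,
      Matrix.one_mul, Matrix.mul_one, smul_smul]
    module
  have htone : (1 : Matrix (Fin 3) (Fin 3) ℝ).trace = 3 := by
    simp [trace_one]
  have hT1 : (g⁻¹ * G).trace = q * s - 3 * μ := by
    rw [hM, trace_sub, trace_smul, trace_smul, htP, htone]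
    ring_nf
  have hT2 : ((g⁻¹ * G) ^ 2).trace = (q^2*s - 2*(q*μ)) * s + 3 * μ^2 := by
    rw [hM2, trace_add, trace_smul, trace_smul, htP, htone]
    simp [smul_eq_mul]; ring
  have hT3 : ((g⁻¹ * G) ^ 3).trace = (q^3*s^2 - 3*(q^2*μ*s) + 3*(q*μ^2)) * s - 3 * μ^3 := by
    rw [hM3, trace_sub, trace_smul, trace_smul, htP, htone]
    simp [smul_eq_mul]; ring
  have hsne : s ≠ 0 := hv
  have hBval : B = μ - q * s / 2 := by
    rw [hB, hT1, hT2, hT3]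
    have hden : ((q^2*s - 2*(q*μ)) * s + 3 * μ^2) - (1/3) * (q * s - 3 * μ)^2
        = (2/3) * (q*s)^2 := by ring
    rw [hden]
    have : (2/3) * (q*s)^2 ≠ 0 := by positivity
    field_simp
    ring
  have hkey : (g⁻¹ * G).trace + 2 * B = -μ := by
    rw [hT1, hBval]; ring
  intro a b
  rw [hkey, hG a b, hμ]
  ring
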